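/- Let X ⊂ ℝ^d (d ≥ 1) be a compact set with nonempty interior, and let φ : ℝ^d → ℝ be twice continuously differentiable, globally Lipschitz with constant L* > 0 (so ‖∇φ(q)‖ ≤ L* for all q), and suppose the Lipschitz constant is attained at an interior point q* of X, i.e. ‖∇φ(q*)‖ = L*. Then there exist constants C₀ > 0, κ > 0 and δ₀ > 0 such that for all δ ∈ (0, δ₀) and all n ∈ ℕ, if q₁, …, qₙ are independent random points, each uniformly distributed on X (with respect to Lebesgue measure), then with probability at least 1 − 3 exp(−n κ δ^{2d−1}) there exist indices i ≠ j with |φ(qᵢ) − φ(qⱼ)| / ‖qᵢ − qⱼ‖ ≥ (1 − δ) L* − C₀ δ. (Theorem 1.) -/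

import Mathlib

open MeasureTheory

open scoped RealInnerProductSpace ENNReal

private lemma eucl_norm_le_of_abs_le {d : ℕ} (z : EuclideanSpace ℝ (Fin d)) {c : ℝ}
    (hc : 0 ≤ c) (h : ∀ i, |z i| ≤ c) : ‖z‖ ≤ d * c := by
  rw [EuclideanSpace.norm_eq]
  have h1 : ∑ i, ‖z i‖ ^ 2 ≤ (d : ℝ) * c ^ 2 := by
    calc ∑ i, ‖z i‖ ^ 2 ≤ ∑ _i : Fin d, c ^ 2 := by
          refine Finset.sum_le_sum fun i _ => ?_
          rw [Real.norm_eq_abs]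
          exact pow_le_pow_left₀ (abs_nonneg _) (h i) 2
      _ = d * c ^ 2 := by simp [Finset.sum_const, Finset.card_univ, nsmul_eq_mul]
  have h2 : (d : ℝ) * c ^ 2 ≤ ((d : ℝ) * c) ^ 2 := by
    have h3 : (d : ℝ) ≤ (d : ℝ) ^ 2 := by exact_mod_cast Nat.le_self_pow two_ne_zero d
    nlinarith [sq_nonneg c]
  calc Real.sqrt (∑ i, ‖z i‖ ^ 2) ≤ Real.sqrt (((d : ℝ) * c) ^ 2) :=
        Real.sqrt_le_sqrt (h1.trans h2)
    _ = d * c := Real.sqrt_sq (by positivity)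

set_option maxHeartbeats 4000000 in
theorem lipschitz_estimation_sample_complexity
    {d : ℕ} (hd : 1 ≤ d) (X : Set (EuclideanSpace ℝ (Fin d)))
    (hXcompact : IsCompact X) (hXint : (interior X).Nonempty)
    (φ : EuclideanSpace ℝ (Fin d) → ℝ) (hφ : ContDiff ℝ 2 φ)
    (Lstar : ℝ) (hLpos : 0 < Lstar)
    (hgrad : ∀ q, ‖gradient φ q‖ ≤ Lstar)
    (qstar : EuclideanSpace ℝ (Fin d)) (hqstar_mem : qstar ∈ interior X)
    (hqstar : ‖gradient φ qstar‖ = Lstar) :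
    ∃ C₀ > (0 : ℝ), ∃ κ > (0 : ℝ), ∃ δ₀ > (0 : ℝ),
      ∀ δ ∈ Set.Ioo (0 : ℝ) δ₀, ∀ n : ℕ,
        (Measure.pi fun _ : Fin n =>
            ((volume X)⁻¹ • volume.restrict X :
              Measure (EuclideanSpace ℝ (Fin d))))
          {q : Fin n → EuclideanSpace ℝ (Fin d) | ∃ i j : Fin n, i ≠ j ∧
            (1 - δ) * Lstar - C₀ * δ ≤ |φ (q i) - φ (q j)| / ‖q i - q j‖} ≥
        ENNReal.ofReal (1 - 3 * Real.exp (-(n : ℝ) * κ * δ ^ (2 * d - 1))) := by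
  classical
  have hLne : Lstar ≠ 0 := ne_of_gt hLpos
  set g₀ : EuclideanSpace ℝ (Fin d) := gradient φ qstar with hg₀
  set u : EuclideanSpace ℝ (Fin d) := Lstar⁻¹ • g₀ with hu
  have hu_norm : ‖u‖ = 1 := by
    rw [hu, norm_smul, Real.norm_eq_abs, abs_of_pos (inv_pos.mpr hLpos), hqstar]
    exact inv_mul_cancel₀ hLne
  set k : Fin d := ⟨0, hd⟩ with hk
  -- orthonormal basis with `b k = u`
  obtain ⟨b, hbk⟩ : ∃ b : OrthonormalBasis (Fin d) ℝ (EuclideanSpace ℝ (Fin d)), b k = u := by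
    have horth : Orthonormal ℝ (({k} : Set (Fin d)).restrict (fun _ => u)) := by
      constructor
      · intro i; exact hu_norm
      · intro i j hij
        exact absurd (Subtype.ext ((Set.mem_singleton_iff.1 i.2).trans
          (Set.mem_singleton_iff.1 j.2).symm)) hij
    obtain ⟨b, hb⟩ := horth.exists_orthonormalBasis_extension_of_card_eq
      (finrank_euclideanSpace (𝕜 := ℝ))
    exact ⟨b, hb _ rfl⟩
  -- local Lipschitz bound for the derivative
  have hfd : ContDiff ℝ 1 (fderiv ℝ φ) := hφ.fderiv_right (by norm_num)
  obtain ⟨K, t, ht, hKlip⟩ := hfd.contDiffAt.exists_lipschitzOnWith (x := qstar)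
  have htX : t ∩ X ∈ nhds qstar :=
    Filter.inter_mem ht (mem_interior_iff_mem_nhds.mp hqstar_mem)
  obtain ⟨ε, hε, hball⟩ := Metric.mem_nhds_iff.mp htX
  -- volume facts
  have hV_ne_top : volume X ≠ ⊤ := hXcompact.measure_lt_top.ne
  have hV_pos : 0 < volume X := by
    calc (0 : ℝ≥0∞) < volume (Metric.ball qstar ε) := Metric.measure_ball_pos volume qstar hε
      _ ≤ volume X := measure_mono (fun x hx => (hball hx).2)
  set vR : ℝ := (volume X).toReal with hvR
  have hvR_pos : 0 < vR := ENNReal.toReal_pos hV_pos.ne' hV_ne_top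
  have hXvol : volume X = ENNReal.ofReal vR := (ENNReal.ofReal_toReal hV_ne_top).symm
  set D : ℝ := (d : ℝ) with hD
  have hD1 : (1 : ℝ) ≤ D := by rw [hD]; exact_mod_cast hd
  have hKnn : (0 : ℝ) ≤ (K : ℝ) := K.coe_nonneg
  set C₀ : ℝ := Lstar * D / 2 + 4 * D * (K : ℝ) + 1 with hC₀
  set κ : ℝ := 2 ^ d / vR with hκ
  set δ₀ : ℝ := min 1 (ε / (8 * D)) with hδ₀
  have hC₀pos : 0 < C₀ := by
    have h1 : 0 ≤ Lstar * D / 2 := by positivity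
    have h2 : 0 ≤ 4 * D * (K : ℝ) := by positivity
    rw [hC₀]; linarith
  have hκpos : 0 < κ := div_pos (by positivity) hvR_pos
  have hδ₀pos : 0 < δ₀ := lt_min one_pos (div_pos hε (by positivity))
  refine ⟨C₀, hC₀pos, κ, hκpos, δ₀, hδ₀pos, ?_⟩
  rintro δ ⟨hδ0, hδlt⟩ n
  have hδ1 : δ < 1 := lt_of_lt_of_le hδlt (min_le_left _ _)
  have hδε : 8 * D * δ < ε := by
    have h1 := lt_of_lt_of_le hδlt (min_le_right _ _)
    have h2 : (0 : ℝ) < 8 * D := by positivity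
    rw [lt_div_iff₀ h2] at h1
    linarith
  set ν : Measure (EuclideanSpace ℝ (Fin d)) := (volume X)⁻¹ • volume.restrict X with hνdef
  set c : Fin d → ℝ := fun i => b.repr qstar i with hc
  set I₁ : Fin d → Set ℝ := fun i =>
    if i = k then Set.Icc (c i - 4 * δ) (c i - 2 * δ)
    else Set.Icc (c i - δ ^ 2) (c i + δ ^ 2) with hI₁
  set I₂ : Fin d → Set ℝ := fun i =>
    if i = k then Set.Icc (c i + 2 * δ) (c i + 4 * δ)
    else Set.Icc (c i - δ ^ 2) (c i + δ ^ 2) with hI₂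
  set A : Set (EuclideanSpace ℝ (Fin d)) := {x | ∀ i, b.repr x i ∈ I₁ i} with hA
  set B : Set (EuclideanSpace ℝ (Fin d)) := {x | ∀ i, b.repr x i ∈ I₂ i} with hB
  have hI₁m : ∀ i, MeasurableSet (I₁ i) := by
    intro i; simp only [hI₁]; split <;> exact measurableSet_Icc
  have hI₂m : ∀ i, MeasurableSet (I₂ i) := by
    intro i; simp only [hI₂]; split <;> exact measurableSet_Icc
  -- generic facts about coordinate boxes
  have hmeas : ∀ (I : Fin d → Set ℝ), (∀ i, MeasurableSet (I i)) →
      MeasurableSet {x : EuclideanSpace ℝ (Fin d) | ∀ i, b.repr x i ∈ I i} := by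
    intro I hI
    have h1 : {x : EuclideanSpace ℝ (Fin d) | ∀ i, b.repr x i ∈ I i}
        = (fun x => ((MeasurableEquiv.toLp 2 (Fin d → ℝ)).symm) (b.repr x)) ⁻¹'
          (Set.univ.pi I) := by
      ext x; exact ⟨fun h i _ => h i, fun h i => h i (Set.mem_univ i)⟩
    rw [h1]
    exact (MeasurableSet.univ_pi hI).preimage
      (((MeasurableEquiv.toLp 2 (Fin d → ℝ)).symm).measurable.comp
        b.repr.continuous.measurable)
  have hvol : ∀ (I : Fin d → Set ℝ), (∀ i, MeasurableSet (I i)) →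
      volume {x : EuclideanSpace ℝ (Fin d) | ∀ i, b.repr x i ∈ I i}
        = ∏ i, volume (I i) := by
    intro I hI
    have h0 : {z : EuclideanSpace ℝ (Fin d) | ∀ i, z i ∈ I i}
        = ((MeasurableEquiv.toLp 2 (Fin d → ℝ)).symm) ⁻¹' (Set.univ.pi I) := by
      ext z; exact ⟨fun h i _ => h i, fun h i => h i (Set.mem_univ i)⟩
    have h1 : {x : EuclideanSpace ℝ (Fin d) | ∀ i, b.repr x i ∈ I i}
        = b.repr ⁻¹' {z : EuclideanSpace ℝ (Fin d) | ∀ i, z i ∈ I i} := rfl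
    rw [h1, b.measurePreserving_repr.measure_preimage
      (by rw [h0]; exact ((MeasurableSet.univ_pi hI).preimage
        ((MeasurableEquiv.toLp 2 (Fin d → ℝ)).symm).measurable).nullMeasurableSet),
      h0, (EuclideanSpace.volume_preserving_symm_measurableEquiv_toLp (Fin d)).measure_preimage
        (MeasurableSet.univ_pi hI).nullMeasurableSet, volume_pi_pi]
  -- volumes of A and B
  have hprod_eq : ∀ (I : Fin d → Set ℝ), (∀ i, volume (I i)
      = ENNReal.ofReal (if i = k then 2 * δ else 2 * δ ^ 2)) →
      ∏ i, volume (I i) = ENNReal.ofReal (2 ^ d * δ ^ (2 * d - 1)) := by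
    intro I hI
    have h1 : ∏ i, volume (I i)
        = ENNReal.ofReal (∏ i, (if i = k then 2 * δ else 2 * δ ^ 2)) := by
      rw [Finset.prod_congr rfl (fun i _ => hI i)]
      exact (ENNReal.ofReal_prod_of_nonneg (fun i _ => by split <;> positivity)).symm
    rw [h1]
    congr 1
    rw [← Finset.mul_prod_erase Finset.univ _ (Finset.mem_univ k), if_pos rfl]
    have h2 : ∀ i ∈ Finset.univ.erase k,
        (if i = k then 2 * δ else 2 * δ ^ 2) = 2 * δ ^ 2 := by
      intro i hi
      rw [if_neg (Finset.ne_of_mem_erase hi)]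
    rw [Finset.prod_congr rfl h2, Finset.prod_const,
      Finset.card_erase_of_mem (Finset.mem_univ k), Finset.card_univ, Fintype.card_fin]
    have h3 : (2 * δ ^ 2) ^ (d - 1) = 2 ^ (d - 1) * δ ^ (2 * (d - 1)) := by
      rw [mul_pow, ← pow_mul]
    rw [h3]
    have h4 : (2 : ℝ) ^ d = 2 ^ (d - 1) * 2 := by
      rw [← pow_succ]
      congr 1
      omega
    have h5 : δ ^ (2 * d - 1) = δ ^ (2 * (d - 1)) * δ := by
      rw [← pow_succ]
      congr 1
      omega
    rw [h4, h5]; ring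
  have hvolA : volume A = ENNReal.ofReal (2 ^ d * δ ^ (2 * d - 1)) := by
    rw [hA, hvol I₁ hI₁m]
    refine hprod_eq I₁ fun i => ?_
    simp only [hI₁]
    by_cases h : i = k
    · rw [if_pos h, if_pos h, Real.volume_Icc]; congr 1; ring
    · rw [if_neg h, if_neg h, Real.volume_Icc]; congr 1; ring
  have hvolB : volume B = ENNReal.ofReal (2 ^ d * δ ^ (2 * d - 1)) := by
    rw [hB, hvol I₂ hI₂m]
    refine hprod_eq I₂ fun i => ?_
    simp only [hI₂]
    by_cases h : i = k
    · rw [if_pos h, if_pos h, Real.volume_Icc]; congr 1; ring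
    · rw [if_neg h, if_neg h, Real.volume_Icc]; congr 1; ring
  -- membership gives closeness to qstar
  have hcoord : ∀ x : EuclideanSpace ℝ (Fin d), ∀ i,
      (b.repr x - b.repr qstar) i = b.repr x i - c i := by
    intro x i; rfl
  have hnorm_eq : ∀ x : EuclideanSpace ℝ (Fin d),
      ‖x - qstar‖ = ‖b.repr x - b.repr qstar‖ := by
    intro x
    rw [← map_sub, b.repr.norm_map]
  have hball_of_mem : ∀ x : EuclideanSpace ℝ (Fin d),
      (∀ i, |b.repr x i - c i| ≤ 4 * δ) → ‖x - qstar‖ ≤ 4 * D * δ := by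
    intro x hx
    rw [hnorm_eq x]
    have h1 := eucl_norm_le_of_abs_le (b.repr x - b.repr qstar) (c := 4 * δ)
      (by positivity) (fun i => by rw [hcoord]; exact hx i)
    calc ‖b.repr x - b.repr qstar‖ ≤ D * (4 * δ) := h1
      _ = 4 * D * δ := by ring
  have hmemA_abs : ∀ x ∈ A, ∀ i, |b.repr x i - c i| ≤ 4 * δ := by
    intro x hx i
    have h1 := hx i
    simp only [hI₁] at h1
    by_cases h : i = k
    · rw [if_pos h] at h1
      obtain ⟨ha, hb'⟩ := h1
      rw [abs_le]; constructor <;> linarith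
    · rw [if_neg h] at h1
      obtain ⟨ha, hb'⟩ := h1
      have : δ ^ 2 ≤ δ := by nlinarith
      rw [abs_le]; constructor <;> linarith
  have hmemB_abs : ∀ x ∈ B, ∀ i, |b.repr x i - c i| ≤ 4 * δ := by
    intro x hx i
    have h1 := hx i
    simp only [hI₂] at h1
    by_cases h : i = k
    · rw [if_pos h] at h1
      obtain ⟨ha, hb'⟩ := h1
      rw [abs_le]; constructor <;> linarith
    · rw [if_neg h] at h1
      obtain ⟨ha, hb'⟩ := h1
      have : δ ^ 2 ≤ δ := by nlinarith
      rw [abs_le]; constructor <;> linarith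
  have hAball : ∀ x ∈ A, ‖x - qstar‖ ≤ 4 * D * δ := fun x hx =>
    hball_of_mem x (hmemA_abs x hx)
  have hBball : ∀ x ∈ B, ‖x - qstar‖ ≤ 4 * D * δ := fun x hx =>
    hball_of_mem x (hmemB_abs x hx)
  have hrδε : 4 * D * δ < ε := by nlinarith
  have hAX : A ⊆ X := by
    intro x hx
    have h1 := hAball x hx
    exact (hball (by rw [Metric.mem_ball, dist_eq_norm]; linarith)).2
  have hBX : B ⊆ X := by
    intro x hx
    have h1 := hBball x hx
    exact (hball (by rw [Metric.mem_ball, dist_eq_norm]; linarith)).2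
  -- the key analytic estimate
  have hKey : ∀ x₁ ∈ A, ∀ x₂ ∈ B,
      (1 - δ) * Lstar - C₀ * δ ≤ |φ x₂ - φ x₁| / ‖x₂ - x₁‖ := by
    intro x₁ hx₁ x₂ hx₂
    set v : EuclideanSpace ℝ (Fin d) := x₂ - x₁ with hv
    set s : ℝ := b.repr x₂ k - b.repr x₁ k with hs
    have hx₁k := hx₁ k; have hx₂k := hx₂ k
    simp only [hI₁, if_pos rfl] at hx₁k
    simp only [hI₂, if_pos rfl] at hx₂k
    have hs_lb : 4 * δ ≤ s := by
      obtain ⟨h1, h2⟩ := hx₁k; obtain ⟨h3, h4⟩ := hx₂k; rw [hs]; linarith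
    have hrepr_v : ∀ i, b.repr v i = b.repr x₂ i - b.repr x₁ i := by
      intro i; rw [hv, map_sub]; rfl
    have hinner_uv : ⟪u, v⟫ = s := by
      rw [← hbk, ← OrthonormalBasis.repr_apply_apply, hrepr_v k, hs]
    have hs_le_norm : s ≤ ‖v‖ := by
      have h1 := real_inner_le_norm u v
      rw [hinner_uv, hu_norm, one_mul] at h1
      exact h1
    have hv_pos : 0 < ‖v‖ := lt_of_lt_of_le (by positivity) (hs_lb.trans hs_le_norm)
    -- transverse bound
    have hw_norm : ‖v - s • u‖ ≤ 2 * D * δ ^ 2 := by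
      have habs : ∀ i, |b.repr (v - s • u) i - 0| ≤ 2 * δ ^ 2 := by
        intro i
        have h1 : b.repr (v - s • u) i = b.repr v i - s * b.repr u i := by
          rw [map_sub, _root_.map_smul]; rfl
        have h2 : b.repr u = EuclideanSpace.single k 1 := by
          rw [← hbk]; exact b.repr_self k
        by_cases h : i = k
        · subst h
          rw [sub_zero, h1, h2, EuclideanSpace.single_apply, if_pos rfl, mul_one,
            hrepr_v, ← hs]
          simp [abs_nonneg, sub_self]
          positivity
        · have h3 : (EuclideanSpace.single k (1 : ℝ)) i = 0 := by
            rw [EuclideanSpace.single_apply, if_neg h]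
          rw [sub_zero, h1, h2, h3, mul_zero, sub_zero, hrepr_v]
          have hxa := hx₁ i; have hxb := hx₂ i
          simp only [hI₁] at hxa
          rw [if_neg h] at hxa
          simp only [hI₂] at hxb
          rw [if_neg h] at hxb
          obtain ⟨ha1, ha2⟩ := hxa; obtain ⟨hb1, hb2⟩ := hxb
          rw [abs_le]; constructor <;> linarith
      have h4 : ‖v - s • u‖ = ‖b.repr (v - s • u)‖ := (b.repr.norm_map _).symm
      rw [h4]
      have h5 := eucl_norm_le_of_abs_le (b.repr (v - s • u)) (c := 2 * δ ^ 2)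
        (by positivity) (fun i => by have := habs i; rwa [sub_zero] at this)
      calc ‖b.repr (v - s • u)‖ ≤ D * (2 * δ ^ 2) := h5
        _ = 2 * D * δ ^ 2 := by ring
    have hv_ub : ‖v‖ ≤ s + 2 * D * δ ^ 2 := by
      calc ‖v‖ = ‖s • u + (v - s • u)‖ := by rw [add_sub_cancel]
        _ ≤ ‖s • u‖ + ‖v - s • u‖ := norm_add_le _ _
        _ ≤ s + 2 * D * δ ^ 2 := by
            rw [norm_smul, hu_norm, mul_one, Real.norm_eq_abs,
              abs_of_pos (lt_of_lt_of_le (by positivity : (0:ℝ) < 4 * δ) hs_lb)]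
            linarith [hw_norm]
    -- mean value estimate
    set r : ℝ := 4 * D * δ with hr
    have hqt : qstar ∈ t := mem_of_mem_nhds ht
    have hsub_t : Metric.closedBall qstar r ⊆ t := by
      intro x hx
      rw [Metric.mem_closedBall] at hx
      exact (hball (by rw [Metric.mem_ball]; linarith)).1
    have hx₁r : x₁ ∈ Metric.closedBall qstar r := by
      rw [Metric.mem_closedBall, dist_eq_norm]; exact hAball x₁ hx₁
    have hx₂r : x₂ ∈ Metric.closedBall qstar r := by
      rw [Metric.mem_closedBall, dist_eq_norm]; exact hBball x₂ hx₂
    have hinner_fderiv : (innerSL ℝ g₀ : EuclideanSpace ℝ (Fin d) →L[ℝ] ℝ)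
        = fderiv ℝ φ qstar := by
      ext y
      rw [innerSL_apply_apply, hg₀]
      show ⟪gradient φ qstar, y⟫ = fderiv ℝ φ qstar y
      rw [← InnerProductSpace.toDual_apply_apply]
      simp [gradient]
    have hbound : ∀ x ∈ Metric.closedBall qstar r,
        ‖fderiv ℝ φ x - fderiv ℝ φ qstar‖ ≤ (K : ℝ) * r := by
      intro x hx
      have h1 := hKlip.dist_le_mul x (hsub_t hx) qstar hqt
      rw [Metric.mem_closedBall] at hx
      rw [dist_eq_norm] at h1
      calc ‖fderiv ℝ φ x - fderiv ℝ φ qstar‖ ≤ (K : ℝ) * dist x qstar := h1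
        _ ≤ (K : ℝ) * r := mul_le_mul_of_nonneg_left hx hKnn
    have hmvt : ‖(φ x₂ - ⟪g₀, x₂⟫) - (φ x₁ - ⟪g₀, x₁⟫)‖ ≤ ((K : ℝ) * r) * ‖x₂ - x₁‖ := by
      refine Convex.norm_image_sub_le_of_norm_hasFDerivWithin_le
        (f := fun x => φ x - ⟪g₀, x⟫)
        (f' := fun x => fderiv ℝ φ x - fderiv ℝ φ qstar)
        (fun x _ => ?_) hbound (convex_closedBall _ _) hx₁r hx₂r
      have h1 : HasFDerivAt φ (fderiv ℝ φ x) x :=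
        ((hφ.differentiable (by norm_num)) x).hasFDerivAt
      have h2 : HasFDerivAt (fun y => ⟪g₀, y⟫) (fderiv ℝ φ qstar) x := by
        rw [← hinner_fderiv]
        exact (innerSL ℝ g₀).hasFDerivAt
      exact (h1.sub h2).hasFDerivWithinAt
    have hg₀u : g₀ = Lstar • u := by rw [hu, smul_inv_smul₀ hLne]
    have hinner_v : ⟪g₀, x₂⟫ - ⟪g₀, x₁⟫ = Lstar * s := by
      rw [← inner_sub_right, ← hv, hg₀u, real_inner_smul_left, hinner_uv]
    have hlow : Lstar * s - ((K : ℝ) * r) * ‖v‖ ≤ φ x₂ - φ x₁ := by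
      rw [Real.norm_eq_abs] at hmvt
      have h1 := (abs_le.mp hmvt).1
      have h2 : ((φ x₂ - ⟪g₀, x₂⟫) - (φ x₁ - ⟪g₀, x₁⟫))
          = (φ x₂ - φ x₁) - (⟪g₀, x₂⟫ - ⟪g₀, x₁⟫) := by ring
      rw [h2, hinner_v] at h1
      rw [hv] at *
      linarith
    have hmain : ((1 - δ) * Lstar - C₀ * δ) * ‖v‖ ≤ φ x₂ - φ x₁ := by
      rw [hC₀]
      have hKr : ((K : ℝ) * r) = 4 * D * (K : ℝ) * δ := by rw [hr]; ring
      rw [hKr] at hlow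
      have e1 : Lstar * ‖v‖ ≤ Lstar * s + Lstar * (2 * D * δ ^ 2) := by
        nlinarith [mul_le_mul_of_nonneg_left hv_ub hLpos.le]
      have hc2 : (0 : ℝ) ≤ Lstar * D / 2 :=
        div_nonneg (mul_nonneg hLpos.le (by positivity)) (by norm_num)
      have h3 : δ * (4 * δ) ≤ δ * ‖v‖ :=
        mul_le_mul_of_nonneg_left (hs_lb.trans hs_le_norm) hδ0.le
      have e2 : 2 * D * Lstar * δ ^ 2 ≤ Lstar * D / 2 * (δ * ‖v‖) := by
        nlinarith [mul_le_mul_of_nonneg_left h3 hc2]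
      have e3 : 0 ≤ Lstar * (δ * ‖v‖) :=
        mul_nonneg hLpos.le (mul_nonneg hδ0.le (norm_nonneg v))
      have e4 : 0 ≤ δ * ‖v‖ := mul_nonneg hδ0.le (norm_nonneg v)
      nlinarith [hlow, e1, e2, e3, e4]
    calc (1 - δ) * Lstar - C₀ * δ ≤ (φ x₂ - φ x₁) / ‖v‖ := (le_div_iff₀ hv_pos).2 hmain
      _ ≤ |φ x₂ - φ x₁| / ‖v‖ := (div_le_div_iff_of_pos_right hv_pos).2 (le_abs_self _)
      _ = |φ x₂ - φ x₁| / ‖x₂ - x₁‖ := by rw [hv]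
  -- probability part
  have hAm : MeasurableSet A := hmeas I₁ hI₁m
  have hBm : MeasurableSet B := hmeas I₂ hI₂m
  have hν_univ : ν Set.univ = 1 := by
    rw [hνdef]
    simp only [Measure.smul_apply, Measure.restrict_apply MeasurableSet.univ,
      Set.univ_inter, smul_eq_mul]
    exact ENNReal.inv_mul_cancel hV_pos.ne' hV_ne_top
  haveI hνprob : IsProbabilityMeasure ν := ⟨hν_univ⟩
  set p : ℝ := κ * δ ^ (2 * d - 1) with hp
  have hp_pos : 0 < p := mul_pos hκpos (pow_pos hδ0 _)
  have hcompl : ∀ S : Set (EuclideanSpace ℝ (Fin d)), MeasurableSet S → S ⊆ X →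
      volume S = ENNReal.ofReal (2 ^ d * δ ^ (2 * d - 1)) →
      ν Sᶜ = ENNReal.ofReal (1 - p) := by
    intro S hSm hSX hSvol
    have h1 : Sᶜ ∩ X = X \ S := by ext x; simp [Set.mem_diff, And.comm]
    have h2 : volume (X \ S) = volume X - volume S :=
      measure_diff hSX hSm.nullMeasurableSet (by rw [hSvol]; exact ENNReal.ofReal_ne_top)
    rw [hνdef]
    simp only [Measure.smul_apply, Measure.restrict_apply hSm.compl, smul_eq_mul]
    rw [h1, h2, hSvol, hXvol,
      ← ENNReal.ofReal_sub _ (by positivity : (0:ℝ) ≤ 2 ^ d * δ ^ (2 * d - 1)),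
      ← ENNReal.div_eq_inv_mul, ← ENNReal.ofReal_div_of_pos hvR_pos]
    congr 1
    rw [hp, hκ]
    field_simp
  have hνA : ν Aᶜ ≤ ENNReal.ofReal (Real.exp (-p)) := by
    rw [hcompl A hAm hAX hvolA]
    exact ENNReal.ofReal_le_ofReal (by linarith [Real.add_one_le_exp (-p)])
  have hνB : ν Bᶜ ≤ ENNReal.ofReal (Real.exp (-p)) := by
    rw [hcompl B hBm hBX hvolB]
    exact ENNReal.ofReal_le_ofReal (by linarith [Real.add_one_le_exp (-p)])
  set μn := (Measure.pi fun _ : Fin n => ν) with hμn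
  have hpow : ∀ S : Set (EuclideanSpace ℝ (Fin d)),
      ν Sᶜ ≤ ENNReal.ofReal (Real.exp (-p)) →
      μn {q : Fin n → EuclideanSpace ℝ (Fin d) | ∀ i, q i ∉ S}
        ≤ ENNReal.ofReal (Real.exp (-((n : ℝ) * p))) := by
    intro S hS
    have h1 : {q : Fin n → EuclideanSpace ℝ (Fin d) | ∀ i, q i ∉ S}
        = Set.pi Set.univ (fun _ => Sᶜ) := by ext q; simp [Set.mem_pi]
    rw [hμn, h1, Measure.pi_pi]
    calc ∏ _i : Fin n, ν Sᶜ ≤ ∏ _i : Fin n, ENNReal.ofReal (Real.exp (-p)) :=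
          Finset.prod_le_prod' fun _ _ => hS
      _ = ENNReal.ofReal (Real.exp (-p)) ^ n := by
          rw [Finset.prod_const, Finset.card_univ, Fintype.card_fin]
      _ = ENNReal.ofReal (Real.exp (-p) ^ n) :=
          (ENNReal.ofReal_pow (Real.exp_nonneg _) n).symm
      _ = ENNReal.ofReal (Real.exp (-((n : ℝ) * p))) := by
          rw [← Real.exp_nat_mul]; ring_nf
  set e3 : ℝ := 3 * Real.exp (-(n : ℝ) * κ * δ ^ (2 * d - 1)) with he3
  set Ev : Set (Fin n → EuclideanSpace ℝ (Fin d)) :=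
    {q | (∃ i, q i ∈ A) ∧ (∃ j, q j ∈ B)} with hEv
  have hEvc : μn Evᶜ ≤ ENNReal.ofReal e3 := by
    have h1 : Evᶜ ⊆ {q : Fin n → EuclideanSpace ℝ (Fin d) | ∀ i, q i ∉ A}
        ∪ {q : Fin n → EuclideanSpace ℝ (Fin d) | ∀ i, q i ∉ B} := by
      intro q hq
      simp only [hEv, Set.mem_compl_iff, Set.mem_setOf_eq, not_and_or, not_exists] at hq
      rcases hq with h | h
      · exact Or.inl h
      · exact Or.inr h
    calc μn Evᶜ ≤ μn ({q : Fin n → EuclideanSpace ℝ (Fin d) | ∀ i, q i ∉ A}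
            ∪ {q : Fin n → EuclideanSpace ℝ (Fin d) | ∀ i, q i ∉ B}) := measure_mono h1
      _ ≤ μn {q : Fin n → EuclideanSpace ℝ (Fin d) | ∀ i, q i ∉ A}
            + μn {q : Fin n → EuclideanSpace ℝ (Fin d) | ∀ i, q i ∉ B} :=
          measure_union_le _ _
      _ ≤ ENNReal.ofReal (Real.exp (-((n : ℝ) * p)))
            + ENNReal.ofReal (Real.exp (-((n : ℝ) * p))) :=
          add_le_add (hpow A hνA) (hpow B hνB)
      _ = ENNReal.ofReal (2 * Real.exp (-((n : ℝ) * p))) := by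
          rw [← ENNReal.ofReal_add (Real.exp_nonneg _) (Real.exp_nonneg _)]
          congr 1; ring
      _ ≤ ENNReal.ofReal e3 := by
          apply ENNReal.ofReal_le_ofReal
          rw [he3, hp]
          have hee : -((n : ℝ) * (κ * δ ^ (2 * d - 1)))
              = -(n : ℝ) * κ * δ ^ (2 * d - 1) := by ring
          rw [hee]
          linarith [Real.exp_pos (-(n : ℝ) * κ * δ ^ (2 * d - 1))]
  have hsubT : Ev ⊆ {q : Fin n → EuclideanSpace ℝ (Fin d) | ∃ i j : Fin n, i ≠ j ∧
      (1 - δ) * Lstar - C₀ * δ ≤ |φ (q i) - φ (q j)| / ‖q i - q j‖} := by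
    rintro q ⟨⟨i, hi⟩, ⟨j, hj⟩⟩
    have hij : i ≠ j := by
      rintro rfl
      have h1 := hi k; have h2 := hj k
      simp only [hI₁, if_pos rfl] at h1
      simp only [hI₂, if_pos rfl] at h2
      obtain ⟨ha1, ha2⟩ := h1; obtain ⟨hb1, hb2⟩ := h2
      linarith
    refine ⟨i, j, hij, ?_⟩
    have h3 := hKey (q i) hi (q j) hj
    rwa [abs_sub_comm, norm_sub_rev] at h3
  rw [ge_iff_le]
  by_cases hcase : 1 - e3 ≤ 0
  · rw [ENNReal.ofReal_of_nonpos hcase]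
    exact zero_le
  · push_neg at hcase
    have h2 : μn Set.univ = 1 := by
      rw [hμn, Measure.pi_univ]; simp [hν_univ]
    have h3 : (1 : ℝ≥0∞) ≤ μn Ev + μn Evᶜ := by
      rw [← h2]
      calc μn Set.univ = μn (Ev ∪ Evᶜ) := by rw [Set.union_compl_self]
        _ ≤ μn Ev + μn Evᶜ := measure_union_le _ _
    have h4 : (1 : ℝ≥0∞) - ENNReal.ofReal e3 ≤ μn Ev :=
      tsub_le_iff_right.mpr (h3.trans (add_le_add_right hEvc _))
    calc ENNReal.ofReal (1 - e3) = 1 - ENNReal.ofReal e3 := by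
          rw [ENNReal.ofReal_sub _ (by positivity), ENNReal.ofReal_one]
      _ ≤ μn Ev := h4
      _ ≤ μn {q : Fin n → EuclideanSpace ℝ (Fin d) | ∃ i j : Fin n, i ≠ j ∧
            (1 - δ) * Lstar - C₀ * δ ≤ |φ (q i) - φ (q j)| / ‖q i - q j‖} :=
          measure_mono hsubT
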